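/- Let G on vertex set V (|V| = n ≥ 2) be the disjoint union of k spanning arborescences A_1,...,A_k with k ≥ 2n−3. Then G contains a rainbow spanning arborescence, i.e., a spanning arborescence using at most one arc from each A_i. -/

import Mathlib

open Finset

variable {V : Type*}

/-- `A` is the arc set of an arborescence on vertex set `U` rooted at `r`:
all arcs lie within `U`, the root has no incoming arc, every other vertex of `U`
has exactly one incoming arc, and every vertex of `U` is reachable from `r`. -/
def IsArborOn [DecidableEq V] (U : Finset V) (A : Finset (V × V)) (r : V) : Prop :=
  r ∈ U ∧ (∀ e ∈ A, e.1 ∈ U ∧ e.2 ∈ U) ∧ (∀ e ∈ A, e.2 ≠ r) ∧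
  (∀ v ∈ U, v ≠ r → (A.filter (fun e => e.2 = v)).card = 1) ∧
  (∀ v ∈ U, Relation.ReflTransGen (fun a b => (a, b) ∈ A) r v)

/-- A spanning arborescence on the whole (finite) vertex type. -/
def IsSpanningArbor [Fintype V] [DecidableEq V] (A : Finset (V × V)) (r : V) : Prop :=
  IsArborOn Finset.univ A r

/-- `B` is rainbow w.r.t. the colored arc sets `A 0, …, A (k-1)`:
each arc of `B` can be assigned a color whose class contains it, with all
assigned colors distinct (i.e. at most one arc from each color). -/
def IsRainbowOf {k : ℕ} (A : Fin k → Finset (V × V)) (B : Finset (V × V)) : Prop :=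
  ∃ c : V × V → Fin k, Set.InjOn c ↑B ∧ ∀ e ∈ B, e ∈ A (c e)

set_option linter.unusedSectionVars false

namespace Stmt11

variable [DecidableEq V] {k : ℕ}

def Rel (U : Finset V) (r : V) (p : V → V) (a b : V) : Prop :=
  b ∈ U ∧ b ≠ r ∧ a = p b

def Reach (U : Finset V) (r : V) (p : V → V) : Prop :=
  ∀ u ∈ U, Relation.ReflTransGen (Rel U r p) r u

def PMap (U : Finset V) (r : V) (p : V → V) (X : Finset (V × V)) : Prop :=
  (∀ u ∈ U.erase r, p u ∈ U ∧ (p u, u) ∈ X) ∧ Reach U r p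

def RB (𝒜 : Fin k → Finset (V × V)) (U : Finset V) (ρ : V) (K : Finset (Fin k)) : Prop :=
  ∃ p κ, (∀ u ∈ U.erase ρ, p u ∈ U) ∧ Reach U ρ p ∧
    Set.InjOn κ ↑(U.erase ρ) ∧ ∀ u ∈ U.erase ρ, κ u ∈ K ∧ (p u, u) ∈ 𝒜 (κ u)

lemma exitArc {U : Finset V} {r : V} {p : V → V} (hre : Reach U r p)
    {S : Finset V} (hr : r ∈ S) {u : V} (hu : u ∈ U) (hus : u ∉ S) :
    ∃ b ∈ U, b ∉ S ∧ b ≠ r ∧ p b ∈ S := by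
  have key : ∀ x, Relation.ReflTransGen (Rel U r p) r x →
      x ∈ S ∨ ∃ b ∈ U, b ∉ S ∧ b ≠ r ∧ p b ∈ S := by
    intro x hx
    induction hx with
    | refl => exact Or.inl hr
    | tail hab hbc ih =>
      rename_i a b
      rcases ih with ha | hw
      · by_cases hbS : b ∈ S
        · exact Or.inl hbS
        · exact Or.inr ⟨b, hbc.1, hbS, hbc.2.1, by rw [← hbc.2.2]; exact ha⟩
      · exact Or.inr hw
  rcases key u (hre u hu) with h | h
  · exact absurd h hus
  · exact h

lemma nsl {U : Finset V} {r : V} {p : V → V} (hre : Reach U r p)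
    {u : V} (hu : u ∈ U) (hur : u ≠ r) : p u ≠ u := by
  intro h
  have key : ∀ x, Relation.ReflTransGen (Rel U r p) r x → x ≠ u := by
    intro x hx
    induction hx with
    | refl => exact fun hru => hur hru.symm
    | tail hab hbc ih =>
      rename_i a b
      rintro rfl
      exact ih (by rw [hbc.2.2, h])
  exact key u (hre u hu) rfl

lemma GROW (𝒜 : Fin k → Finset (V × V)) (rt : Fin k → V) (K : Finset (Fin k))
    (U : Finset V) :
    ∀ m : ℕ, ∀ (S : Finset V) (w : V) (p : V → V) (κ : V → Fin k) (Fr : Finset (Fin k)),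
    S ⊆ U → (U \ S).card = m → w ∈ S →
    (∀ u ∈ S.erase w, p u ∈ S ∧ (p u, u) ∈ 𝒜 (κ u)) → Reach S w p →
    Set.InjOn κ ↑(S.erase w) → (∀ u ∈ S.erase w, κ u ∈ K) →
    Fr ⊆ K → (∀ u ∈ S.erase w, κ u ∉ Fr) → m ≤ Fr.card →
    (∀ i ∈ Fr, rt i ∈ S ∧ ∃ q, PMap U (rt i) q (𝒜 i)) →
    RB 𝒜 U w K := by
  intro m
  induction m with
  | zero =>
    intro S w p κ Fr hSU hcard hwS hpar hre hinj hκK hFrK hdisj hm hfam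
    have hUS : U = S := by
      apply Finset.Subset.antisymm _ hSU
      intro x hx
      by_contra hxS
      have : x ∈ U \ S := Finset.mem_sdiff.mpr ⟨hx, hxS⟩
      rw [Finset.card_eq_zero.mp hcard] at this
      exact absurd this (Finset.notMem_empty x)
    subst hUS
    exact ⟨p, κ, fun u hu => hSU (hpar u hu).1, hre, hinj, fun u hu => ⟨hκK u hu, (hpar u hu).2⟩⟩
  | succ m ih =>
    intro S w p κ Fr hSU hcard hwS hpar hre hinj hκK hFrK hdisj hm hfam
    obtain ⟨u₀, hu₀⟩ : (U \ S).Nonempty := Finset.card_pos.mp (by omega)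
    obtain ⟨hu₀U, hu₀S⟩ := Finset.mem_sdiff.mp hu₀
    obtain ⟨i, hi⟩ : Fr.Nonempty := Finset.card_pos.mp (by omega)
    obtain ⟨hriS, q, hq⟩ := hfam i hi
    obtain ⟨b, hbU, hbS, hbr, hqbS⟩ := exitArc hq.2 hriS hu₀U hu₀S
    have harc : (q b, b) ∈ 𝒜 i := (hq.1 b (Finset.mem_erase.mpr ⟨hbr, hbU⟩)).2
    -- new data
    set S' := insert b S with hS'
    set p' := fun x => if x = b then q b else p x with hp'
    set κ' := fun x => if x = b then i else κ x with hκ'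
    have hbw : b ≠ w := fun h => hbS (h ▸ hwS)
    have hmemS' : ∀ x ∈ S, x ∈ S' := fun x hx => Finset.mem_insert_of_mem hx
    have hlift : ∀ x, Relation.ReflTransGen (Rel S w p) w x →
        Relation.ReflTransGen (Rel S' w p') w x := by
      intro x hx
      induction hx with
      | refl => exact Relation.ReflTransGen.refl
      | tail hac hcb ihx =>
        rename_i a c
        refine ihx.tail ⟨hmemS' c hcb.1, hcb.2.1, ?_⟩
        have hcb' : c ≠ b := fun h => hbS (h ▸ hcb.1)
        simp only [hp', if_neg hcb']
        exact hcb.2.2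
    apply ih S' w p' κ' (Fr.erase i)
    · exact Finset.insert_subset hbU hSU
    · have : U \ S' = (U \ S).erase b := by
        ext x
        simp only [hS', Finset.mem_sdiff, Finset.mem_insert, Finset.mem_erase]
        tauto
      rw [this, Finset.card_erase_of_mem (Finset.mem_sdiff.mpr ⟨hbU, hbS⟩), hcard]
      omega
    · exact hmemS' w hwS
    · intro u hu
      rcases Finset.mem_erase.mp hu with ⟨huw, huS'⟩
      rcases Finset.mem_insert.mp huS' with rfl | huS
      · simp only [hp', hκ', if_pos rfl]
        exact ⟨hmemS' _ hqbS, harc⟩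
      · have hub : u ≠ b := fun h => hbS (h ▸ huS)
        simp only [hp', hκ', if_neg hub]
        obtain ⟨h1, h2⟩ := hpar u (Finset.mem_erase.mpr ⟨huw, huS⟩)
        exact ⟨hmemS' _ h1, h2⟩
    · intro u hu
      rcases Finset.mem_insert.mp hu with rfl | huS
      · refine (hlift _ (hre _ hqbS)).tail ⟨Finset.mem_insert_self _ _, hbw, ?_⟩
        simp [hp']
      · exact hlift u (hre u huS)
    · intro x hx y hy hxy
      rw [Finset.mem_coe, Finset.mem_erase] at hx hy
      rcases Finset.mem_insert.mp hx.2 with rfl | hxS <;>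
        rcases Finset.mem_insert.mp hy.2 with rfl | hyS
      · rfl
      · exfalso
        have hyb : y ≠ x := fun h => hbS (h ▸ hyS)
        simp only [hκ', if_pos rfl, if_neg hyb] at hxy
        exact hdisj y (Finset.mem_erase.mpr ⟨hy.1, hyS⟩) (hxy ▸ hi)
      · exfalso
        have hxb : x ≠ y := fun h => hbS (h ▸ hxS)
        simp only [hκ', if_pos rfl, if_neg hxb] at hxy
        exact hdisj x (Finset.mem_erase.mpr ⟨hx.1, hxS⟩) (hxy ▸ hi)
      · have hxb : x ≠ b := fun h => hbS (h ▸ hxS)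
        have hyb : y ≠ b := fun h => hbS (h ▸ hyS)
        simp only [hκ', if_neg hxb, if_neg hyb] at hxy
        exact hinj (by rw [Finset.mem_coe, Finset.mem_erase]; exact ⟨hx.1, hxS⟩)
          (by rw [Finset.mem_coe, Finset.mem_erase]; exact ⟨hy.1, hyS⟩) hxy
    · intro u hu
      rcases Finset.mem_erase.mp hu with ⟨huw, huS'⟩
      rcases Finset.mem_insert.mp huS' with rfl | huS
      · simpa [hκ'] using hFrK hi
      · have hub : u ≠ b := fun h => hbS (h ▸ huS)
        simp only [hκ', if_neg hub]
        exact hκK u (Finset.mem_erase.mpr ⟨huw, huS⟩)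
    · exact (Finset.erase_subset _ _).trans hFrK
    · intro u hu
      rcases Finset.mem_erase.mp hu with ⟨huw, huS'⟩
      rcases Finset.mem_insert.mp huS' with rfl | huS
      · simp only [hκ', if_pos rfl]
        exact fun h => (Finset.mem_erase.mp h).1 rfl
      · have hub : u ≠ b := fun h => hbS (h ▸ huS)
        simp only [hκ', if_neg hub]
        intro h
        exact hdisj u (Finset.mem_erase.mpr ⟨huw, huS⟩) (Finset.mem_of_mem_erase h)
    · rw [Finset.card_erase_of_mem hi]; omega
    · intro j hj
      obtain ⟨h1, h2⟩ := hfam j (Finset.mem_of_mem_erase hj)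
      exact ⟨hmemS' _ h1, h2⟩

def Fam (U : Finset V) (𝒜 : Fin k → Finset (V × V)) (rt : Fin k → V)
    (K : Finset (Fin k)) : Prop :=
  ∀ i ∈ K, ∃ p, rt i ∈ U ∧ PMap U (rt i) p (𝒜 i)

lemma TT (𝒜 : Fin k → Finset (V × V)) (rt : Fin k → V) (K : Finset (Fin k)) (U : Finset V)
    (hFam : Fam U 𝒜 rt K) :
    ∀ t : ℕ, ∀ (T M : Finset V) (v ρ : V) (pT pM : V → V) (κ : V → Fin k)
      (Fr : Finset (Fin k)),
    T.card = t → Disjoint T M → T ∪ M = U → v ∈ T → ρ ∈ M →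
    (∀ u ∈ T.erase v, pT u ∈ T ∧ (pT u, u) ∈ 𝒜 (κ u)) → Reach T v pT →
    (∀ u ∈ M.erase ρ, pM u ∈ M ∧ (pM u, u) ∈ 𝒜 (κ u)) → Reach M ρ pM →
    Set.InjOn κ ↑(T.erase v ∪ M.erase ρ) →
    (∀ u ∈ T.erase v ∪ M.erase ρ, κ u ∈ K) →
    Fr ⊆ K → (∀ u ∈ T.erase v ∪ M.erase ρ, κ u ∉ Fr) →
    M.card + (T.card - 1) ≤ Fr.card →
    ∃ ρ' ∈ U, RB 𝒜 U ρ' K := by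
  intro t
  induction t using Nat.strong_induction_on with
  | _ t ih =>
  intro T M v ρ pT pM κ Fr htc hdisj hunion hvT hρM hTpar hTre hMpar hMre hinj hκK hFrK
    hκFr hcard
  classical
  have hTU : T ⊆ U := hunion ▸ Finset.subset_union_left
  have hMU : M ⊆ U := hunion ▸ Finset.subset_union_right
  have hvU : v ∈ U := hTU hvT
  have hρU : ρ ∈ U := hMU hρM
  have hvM : v ∉ M := fun h => (Finset.disjoint_left.mp hdisj hvT) h
  have hρT : ρ ∉ T := fun h => (Finset.disjoint_left.mp hdisj h) hρM
  by_cases hcase : ∀ i ∈ Fr, rt i ∈ T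
  · -- rebuild: grow from T
    refine ⟨v, hvU, ?_⟩
    have hUT : U \ T = M := by
      ext x
      simp only [Finset.mem_sdiff, ← hunion, Finset.mem_union]
      constructor
      · rintro ⟨hx | hx, hxT⟩
        · exact absurd hx hxT
        · exact hx
      · intro hx
        exact ⟨Or.inr hx, fun h => (Finset.disjoint_left.mp hdisj h) hx⟩
    apply GROW 𝒜 rt K U M.card T v pT κ Fr hTU (by rw [hUT]) hvT hTpar hTre
    · exact hinj.mono (by simp [Finset.coe_union])
    · exact fun u hu => hκK u (Finset.mem_union_left _ hu)
    · exact hFrK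
    · exact fun u hu => hκFr u (Finset.mem_union_left _ hu)
    · omega
    · intro i hi
      obtain ⟨p, hp⟩ := hFam i (hFrK hi)
      exact ⟨hcase i hi, p, hp.2⟩
  · push_neg at hcase
    obtain ⟨i0, hi0, hri0T⟩ := hcase
    obtain ⟨q, hrtU, hq⟩ := hFam i0 (hFrK hi0)
    have hri0M : rt i0 ∈ M := by
      have := hrtU
      rw [← hunion, Finset.mem_union] at this
      tauto
    obtain ⟨b, hbU, hbM, hbr, hqbM⟩ := exitArc hq.2 hri0M hvU hvM
    have hbT : b ∈ T := by
      rw [← hunion, Finset.mem_union] at hbU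
      tauto
    have harc : (q b, b) ∈ 𝒜 i0 := (hq.1 b (Finset.mem_erase.mpr ⟨hbr, hbU⟩)).2
    set x := q b with hxdef
    have hxM : x ∈ M := hqbM
    by_cases hbv : b = v
    · -- attach: finished arborescence rooted ρ
      subst hbv
      refine ⟨ρ, hρU, ?_⟩
      set pF := fun u => if u = b then x else if u ∈ T then pT u else pM u with hpF
      set κF := fun u => if u = b then i0 else κ u with hκF
      have hvρ : b ≠ ρ := fun h => hρT (h ▸ hvT)
      have hliftM : ∀ z, Relation.ReflTransGen (Rel M ρ pM) ρ z →
          Relation.ReflTransGen (Rel U ρ pF) ρ z := by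
        intro z hz
        induction hz with
        | refl => exact .refl
        | tail hac hrel ihz =>
          rename_i a c
          have hcv : c ≠ b := fun h => hvM (h ▸ hrel.1)
          have hcT : c ∉ T := fun h => (Finset.disjoint_left.mp hdisj h) hrel.1
          exact ihz.tail ⟨hMU hrel.1, hrel.2.1, by
            simp only [hpF, if_neg hcv, if_neg hcT]; exact hrel.2.2⟩
      have hliftT : ∀ z, Relation.ReflTransGen (Rel T b pT) b z →
          Relation.ReflTransGen (Rel U ρ pF) b z := by
        intro z hz
        induction hz with
        | refl => exact .refl
        | tail hac hrel ihz =>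
          rename_i a c
          have hcρ : c ≠ ρ := fun h => hρT (h ▸ hrel.1)
          exact ihz.tail ⟨hTU hrel.1, hcρ, by
            simp only [hpF, if_neg hrel.2.1, if_pos hrel.1]; exact hrel.2.2⟩
      have hreachb : Relation.ReflTransGen (Rel U ρ pF) ρ b := by
        refine (hliftM x (hMre x hxM)).tail ⟨hvU, hvρ, ?_⟩
        simp [hpF]
      refine ⟨pF, κF, ?_, ?_, ?_, ?_⟩
      · intro u hu
        rcases Finset.mem_erase.mp hu with ⟨huρ, huU⟩
        by_cases h1 : u = b
        · subst h1; simp only [hpF, if_pos rfl]; exact hMU hxM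
        · by_cases h2 : u ∈ T
          · simp only [hpF, if_neg h1, if_pos h2]
            exact hTU (hTpar u (Finset.mem_erase.mpr ⟨h1, h2⟩)).1
          · have huM : u ∈ M := by rw [← hunion, Finset.mem_union] at huU; tauto
            simp only [hpF, if_neg h1, if_neg h2]
            exact hMU (hMpar u (Finset.mem_erase.mpr ⟨huρ, huM⟩)).1
      · intro u huU
        by_cases h2 : u ∈ T
        · exact hreachb.trans (hliftT u (hTre u h2))
        · have huM : u ∈ M := by rw [← hunion, Finset.mem_union] at huU; tauto
          exact hliftM u (hMre u huM)
      · intro z hz y hy hzy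
        rw [Finset.mem_coe, Finset.mem_erase] at hz hy
        have hmem : ∀ w', w' ∈ U → w' ≠ ρ → w' ≠ b → w' ∈ T.erase b ∪ M.erase ρ := by
          intro w' hw1 hw2 hw3
          rw [← hunion, Finset.mem_union] at hw1
          rcases hw1 with h | h
          · exact Finset.mem_union_left _ (Finset.mem_erase.mpr ⟨hw3, h⟩)
          · exact Finset.mem_union_right _ (Finset.mem_erase.mpr ⟨hw2, h⟩)
        by_cases h1 : z = b <;> by_cases h2 : y = b
        · rw [h1, h2]
        · exfalso
          simp only [hκF, if_pos h1, if_neg h2] at hzy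
          exact hκFr y (hmem y hy.2 hy.1 h2) (hzy ▸ hi0)
        · exfalso
          simp only [hκF, if_neg h1, if_pos h2] at hzy
          exact hκFr z (hmem z hz.2 hz.1 h1) (hzy.symm ▸ hi0)
        · simp only [hκF, if_neg h1, if_neg h2] at hzy
          exact hinj (Finset.mem_coe.mpr (hmem z hz.2 hz.1 h1))
            (Finset.mem_coe.mpr (hmem y hy.2 hy.1 h2)) hzy
      · intro u hu
        rcases Finset.mem_erase.mp hu with ⟨huρ, huU⟩
        by_cases h1 : u = b
        · subst h1
          simp only [hκF, hpF, if_pos rfl]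
          exact ⟨hFrK hi0, harc⟩
        · by_cases h2 : u ∈ T
          · simp only [hκF, hpF, if_neg h1, if_pos h2]
            exact ⟨hκK u (Finset.mem_union_left _ (Finset.mem_erase.mpr ⟨h1, h2⟩)),
              (hTpar u (Finset.mem_erase.mpr ⟨h1, h2⟩)).2⟩
          · have huM : u ∈ M := by rw [← hunion, Finset.mem_union] at huU; tauto
            simp only [hκF, hpF, if_neg h1, if_neg h2]
            exact ⟨hκK u (Finset.mem_union_right _ (Finset.mem_erase.mpr ⟨huρ, huM⟩)),
              (hMpar u (Finset.mem_erase.mpr ⟨huρ, huM⟩)).2⟩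
    · -- re-hang the subtree of y := b
      set y := b with hydef
      set D := T.filter (fun u => Relation.ReflTransGen (Rel T v pT) y u) with hDdef
      have hDT : D ⊆ T := Finset.filter_subset _ _
      have hyD : y ∈ D := Finset.mem_filter.mpr ⟨hbT, .refl⟩
      have hvD : v ∉ D := by
        intro h
        rcases (Finset.mem_filter.mp h).2.cases_tail with h' | ⟨c, _, hrel⟩
        · exact hbv h'.symm
        · exact hrel.2.1 rfl
      have hDv : ∀ u ∈ D, u ≠ v := fun u hu h => hvD (h ▸ hu)
      have hDρ : ∀ u ∈ D, u ≠ ρ := fun u hu h => hρT (h ▸ hDT hu)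
      have hdown : ∀ u ∈ T, u ≠ v → pT u ∈ D → u ∈ D := by
        intro u huT huv hpu
        exact Finset.mem_filter.mpr ⟨huT, (Finset.mem_filter.mp hpu).2.tail ⟨huT, huv, rfl⟩⟩
      have hDparent : ∀ u ∈ D, u ≠ y → pT u ∈ D := by
        intro u huD huy
        rcases (Finset.mem_filter.mp huD).2.cases_tail with h' | ⟨c, hc, hrel⟩
        · exact absurd h' huy
        · have : c = pT u := hrel.2.2
          subst this
          exact Finset.mem_filter.mpr
            ⟨(hTpar u (Finset.mem_erase.mpr ⟨hrel.2.1, hrel.1⟩)).1, hc⟩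
      set T' := T \ D with hT'def
      set M' := M ∪ D with hM'def
      set pM' := fun u => if u = y then x else if u ∈ D then pT u else pM u with hpM'
      set κ2 := fun u => if u = y then i0 else κ u with hκ2
      set Fr' := insert (κ y) (Fr.erase i0) with hFr'def
      have hyTv : y ∈ T.erase v := Finset.mem_erase.mpr ⟨hbv, hbT⟩
      have hκyK : κ y ∈ K := hκK y (Finset.mem_union_left _ hyTv)
      have hκyFr : κ y ∉ Fr := hκFr y (Finset.mem_union_left _ hyTv)
      have hvT' : v ∈ T' := Finset.mem_sdiff.mpr ⟨hvT, hvD⟩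
      have hρM' : ρ ∈ M' := Finset.mem_union_left _ hρM
      have hdisj' : Disjoint T' M' := by
        rw [hM'def, Finset.disjoint_union_right]
        exact ⟨Finset.disjoint_of_subset_left Finset.sdiff_subset hdisj,
          Finset.sdiff_disjoint⟩
      have hMy : ∀ u ∈ M, u ≠ y := fun u hu h => (Finset.disjoint_left.mp hdisj hbT) (h ▸ hu)
      have hMD : ∀ u ∈ M, u ∉ D := fun u hu h =>
        (Finset.disjoint_left.mp hdisj (hDT h)) hu
      have hunion' : T' ∪ M' = U := by
        rw [← hunion]
        ext z
        simp only [hT'def, hM'def, Finset.mem_union, Finset.mem_sdiff]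
        constructor
        · rintro (⟨h, _⟩ | h | h)
          · exact Or.inl h
          · exact Or.inr h
          · exact Or.inl (hDT h)
        · rintro (h | h)
          · by_cases hD : z ∈ D
            · exact Or.inr (Or.inr hD)
            · exact Or.inl ⟨h, hD⟩
          · exact Or.inr (Or.inl h)
      have hsub : ∀ u ∈ T'.erase v ∪ M'.erase ρ, u ∈ T.erase v ∪ M.erase ρ := by
        intro u hu
        rcases Finset.mem_union.mp hu with h | h
        · rcases Finset.mem_erase.mp h with ⟨h1, h2⟩
          exact Finset.mem_union_left _
            (Finset.mem_erase.mpr ⟨h1, (Finset.mem_sdiff.mp h2).1⟩)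
        · rcases Finset.mem_erase.mp h with ⟨h1, h2⟩
          rcases Finset.mem_union.mp h2 with h3 | h3
          · exact Finset.mem_union_right _ (Finset.mem_erase.mpr ⟨h1, h3⟩)
          · exact Finset.mem_union_left _ (Finset.mem_erase.mpr ⟨hDv u h3, hDT h3⟩)
      have hT'lt : T'.card < t := by
        rw [← htc]
        apply Finset.card_lt_card
        refine ⟨Finset.sdiff_subset, fun h => ?_⟩
        exact (Finset.mem_sdiff.mp (h hbT)).2 hyD
      -- recursive call
      apply ih T'.card hT'lt T' M' v ρ pT pM' κ2 Fr' rfl hdisj' hunion' hvT' hρM'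
      · -- T' parent map
        intro u hu
        rcases Finset.mem_erase.mp hu with ⟨huv, huT'⟩
        rcases Finset.mem_sdiff.mp huT' with ⟨huT, huD⟩
        obtain ⟨hp1, hp2⟩ := hTpar u (Finset.mem_erase.mpr ⟨huv, huT⟩)
        have huy : u ≠ y := fun h => huD (h ▸ hyD)
        refine ⟨Finset.mem_sdiff.mpr ⟨hp1, fun h => huD (hdown u huT huv h)⟩, ?_⟩
        simp only [hκ2, if_neg huy]
        exact hp2
      · -- Reach T'
        have key : ∀ z, Relation.ReflTransGen (Rel T v pT) v z →
            z ∈ D ∨ Relation.ReflTransGen (Rel T' v pT) v z := by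
          intro z hz
          induction hz with
          | refl => exact Or.inr .refl
          | tail hac hrel ihz =>
            rename_i a c
            by_cases hcD : c ∈ D
            · exact Or.inl hcD
            · rcases ihz with haD | hgood
              · exact absurd (hdown c hrel.1 hrel.2.1 (hrel.2.2 ▸ haD)) hcD
              · exact Or.inr (hgood.tail
                  ⟨Finset.mem_sdiff.mpr ⟨hrel.1, hcD⟩, hrel.2.1, hrel.2.2⟩)
        intro u hu
        rcases Finset.mem_sdiff.mp hu with ⟨huT, huD⟩
        rcases key u (hTre u huT) with h | h
        · exact absurd h huD
        · exact h
      · -- M' parent map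
        intro u hu
        rcases Finset.mem_erase.mp hu with ⟨huρ, huM'⟩
        by_cases huy : u = y
        · simp only [hpM', hκ2, if_pos huy]
          rw [huy]
          exact ⟨Finset.mem_union_left _ hxM, harc⟩
        · rcases Finset.mem_union.mp huM' with huM | huD
          · simp only [hpM', hκ2, if_neg huy, if_neg (hMD u huM)]
            obtain ⟨h1, h2⟩ := hMpar u (Finset.mem_erase.mpr ⟨huρ, huM⟩)
            exact ⟨Finset.mem_union_left _ h1, h2⟩
          · simp only [hpM', hκ2, if_neg huy, if_pos huD]
            obtain ⟨h1, h2⟩ := hTpar u (Finset.mem_erase.mpr ⟨hDv u huD, hDT huD⟩)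
            exact ⟨Finset.mem_union_right _ (hDparent u huD huy), h2⟩
      · -- Reach M'
        have hliftM' : ∀ z, Relation.ReflTransGen (Rel M ρ pM) ρ z →
            Relation.ReflTransGen (Rel M' ρ pM') ρ z := by
          intro z hz
          induction hz with
          | refl => exact .refl
          | tail hac hrel ihz =>
            rename_i a c
            refine ihz.tail ⟨Finset.mem_union_left _ hrel.1, hrel.2.1, ?_⟩
            simp only [hpM', if_neg (hMy c hrel.1), if_neg (hMD c hrel.1)]
            exact hrel.2.2
        have hliftD : ∀ z, Relation.ReflTransGen (Rel T v pT) y z →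
            Relation.ReflTransGen (Rel M' ρ pM') y z := by
          intro z hz
          induction hz with
          | refl => exact .refl
          | tail hac hrel ihz =>
            rename_i a c
            by_cases hcy : c = y
            · exact hcy ▸ .refl
            · have hcD : c ∈ D := Finset.mem_filter.mpr ⟨hrel.1, hac.tail hrel⟩
              refine ihz.tail ⟨Finset.mem_union_right _ hcD, hDρ c hcD, ?_⟩
              simp only [hpM', if_neg hcy, if_pos hcD]
              exact hrel.2.2
        have hreachy : Relation.ReflTransGen (Rel M' ρ pM') ρ y := by
          refine (hliftM' x (hMre x hxM)).tail
            ⟨Finset.mem_union_right _ hyD, hDρ y hyD, ?_⟩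
          simp [hpM']
        intro u hu
        rcases Finset.mem_union.mp hu with huM | huD
        · exact hliftM' u (hMre u huM)
        · exact hreachy.trans (hliftD u (Finset.mem_filter.mp huD).2)
      · -- InjOn κ2
        intro z hz w hw hzw
        rw [Finset.mem_coe] at hz hw
        by_cases h1 : z = y <;> by_cases h2 : w = y
        · rw [h1, h2]
        · exfalso
          simp only [hκ2, if_pos h1, if_neg h2] at hzw
          exact hκFr w (hsub w hw) (hzw ▸ hi0)
        · exfalso
          simp only [hκ2, if_neg h1, if_pos h2] at hzw
          exact hκFr z (hsub z hz) (hzw.symm ▸ hi0)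
        · simp only [hκ2, if_neg h1, if_neg h2] at hzw
          exact hinj (Finset.mem_coe.mpr (hsub z hz)) (Finset.mem_coe.mpr (hsub w hw)) hzw
      · -- κ2 ∈ K
        intro u hu
        by_cases h1 : u = y
        · simp only [hκ2, if_pos h1]
          exact hFrK hi0
        · simp only [hκ2, if_neg h1]
          exact hκK u (hsub u hu)
      · -- Fr' ⊆ K
        intro j hj
        rcases Finset.mem_insert.mp hj with rfl | hj'
        · exact hκyK
        · exact hFrK (Finset.mem_of_mem_erase hj')
      · -- κ2 avoids Fr'
        intro u hu
        by_cases h1 : u = y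
        · simp only [hκ2, if_pos h1]
          intro h
          rcases Finset.mem_insert.mp h with h' | h'
          · exact hκyFr (h' ▸ hi0)
          · exact (Finset.mem_erase.mp h').1 rfl
        · simp only [hκ2, if_neg h1]
          intro h
          rcases Finset.mem_insert.mp h with h' | h'
          · exact h1 (hinj (Finset.mem_coe.mpr (hsub u hu))
              (Finset.mem_coe.mpr (Finset.mem_union_left _ hyTv)) h')
          · exact hκFr u (hsub u hu) (Finset.mem_of_mem_erase h')
      · -- card bound
        have h1 : Fr'.card = Fr.card := by
          rw [hFr'def, Finset.card_insert_of_notMem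
            (fun h => hκyFr (Finset.mem_of_mem_erase h)), Finset.card_erase_of_mem hi0]
          have : 1 ≤ Fr.card := Finset.card_pos.mpr ⟨i0, hi0⟩
          omega
        have h2 : M'.card = M.card + D.card := by
          rw [hM'def, Finset.card_union_of_disjoint]
          rw [Finset.disjoint_left]
          exact hMD
        have h3 : T'.card = T.card - D.card := by
          rw [hT'def, Finset.card_sdiff_of_subset hDT]
        have h4 : D.card ≤ T.card := Finset.card_le_card hDT
        have h5 : 1 ≤ T'.card := Finset.card_pos.mpr ⟨v, hvT'⟩
        omega

lemma MAIN : ∀ n : ℕ, 2 ≤ n → ∀ (𝒜 : Fin k → Finset (V × V)) (rt : Fin k → V)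
    (K : Finset (Fin k)) (U : Finset V), U.card = n → 2 * n - 3 ≤ K.card →
    Fam U 𝒜 rt K → ∃ ρ ∈ U, RB 𝒜 U ρ K := by
  intro n
  induction n using Nat.strong_induction_on with
  | _ n ih =>
  intro hn 𝒜 rt K U hUcard hK hFam
  classical
  by_cases hn2 : n = 2
  · -- base case
    subst hn2
    obtain ⟨i0, hi0⟩ : K.Nonempty := Finset.card_pos.mp (by omega)
    obtain ⟨p, hrt, hp⟩ := hFam i0 hi0
    refine ⟨rt i0, hrt, p, fun _ => i0, fun u hu => (hp.1 u hu).1, hp.2, ?_, ?_⟩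
    · intro a ha b hb _
      have hcard1 : (U.erase (rt i0)).card = 1 := by
        rw [Finset.card_erase_of_mem hrt, hUcard]
      rw [Finset.mem_coe] at ha hb
      have := Finset.card_le_one.mp (le_of_eq hcard1) a ha b hb
      exact this
    · exact fun u hu => ⟨hi0, (hp.1 u hu).2⟩
  · have hn3 : 3 ≤ n := by omega
    obtain ⟨v, hv⟩ : U.Nonempty := Finset.card_pos.mp (by omega)
    set U' := U.erase v with hU'def
    have hU'card : U'.card = n - 1 := by rw [hU'def, Finset.card_erase_of_mem hv, hUcard]
    obtain ⟨u1, hu1⟩ : U'.Nonempty := Finset.card_pos.mp (by omega)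
    have hFam2 : ∀ i ∈ K, ∃ p, rt i ∈ U ∧ PMap U (rt i) p (𝒜 i) := hFam
    have hneV : Nonempty V := ⟨v⟩
    choose! P hP using hFam2
    set z : Fin k → V := fun i => if rt i = v then
        (if h : ∃ c, c ∈ U ∧ c ≠ v ∧ P i c = v then h.choose else v) else P i v with hzdef
    have hzfact : ∀ i ∈ K, z i ∈ U ∧ z i ≠ v ∧ (rt i = v → P i (z i) = v) ∧
        (rt i ≠ v → z i = P i v) := by
      intro i hi
      obtain ⟨hrtU, hPi⟩ := hP i hi
      by_cases hrv : rt i = v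
      · have hex : ∃ c, c ∈ U ∧ c ≠ v ∧ P i c = v := by
          rcases (hPi.2 u1 (Finset.mem_of_mem_erase hu1)).cases_head with h | ⟨c, hrel, _⟩
          · exact absurd (hrv ▸ h.symm) (Finset.mem_erase.mp hu1).1
          · exact ⟨c, hrel.1, fun hcv => hrel.2.1 (hcv.trans hrv.symm), (hrv ▸ hrel.2.2).symm⟩
        have hzi : z i = hex.choose := by simp only [hzdef, if_pos hrv, dif_pos hex]
        obtain ⟨h1, h2, h3⟩ := hex.choose_spec
        rw [hzi]
        exact ⟨h1, h2, fun _ => h3, fun h => absurd hrv h⟩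
      · have hzi : z i = P i v := by simp only [hzdef, if_neg hrv]
        have hvmem : v ∈ U.erase (rt i) := Finset.mem_erase.mpr ⟨fun h => hrv h.symm, hv⟩
        refine ⟨hzi ▸ (hPi.1 v hvmem).1, hzi ▸ nsl hPi.2 hv (fun h => hrv h.symm), ?_, fun _ => hzi⟩
        intro h; exact absurd h hrv
    set r' : Fin k → V := fun i => if rt i = v then z i else rt i with hr'def
    set Pc : Fin k → V → V := fun i u => if P i u = v then z i else P i u with hPcdef
    set 𝒜' : Fin k → Finset (V × V) :=
      fun i => (U'.erase (r' i)).image (fun u => (Pc i u, u)) with h𝒜'def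
    have hne_rt : ∀ i ∈ K, ∀ u, u ∈ U' → u ≠ r' i → u ≠ rt i := by
      intro i hi u huU' hur
      by_cases hrv : rt i = v
      · exact fun h => (Finset.mem_erase.mp huU').1 (h.trans hrv)
      · simp only [hr'def, if_neg hrv] at hur
        exact hur
    have hFam' : Fam U' 𝒜' r' K := by
      intro i hi
      obtain ⟨hrtU, hPi⟩ := hP i hi
      obtain ⟨hz1, hz2, hz3, hz4⟩ := hzfact i hi
      have hr'mem : r' i ∈ U' := by
        by_cases hrv : rt i = v
        · simp only [hr'def, if_pos hrv]
          exact Finset.mem_erase.mpr ⟨hz2, hz1⟩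
        · simp only [hr'def, if_neg hrv]
          exact Finset.mem_erase.mpr ⟨hrv, hrtU⟩
      refine ⟨Pc i, hr'mem, ?_, ?_⟩
      · intro u hu
        rcases Finset.mem_erase.mp hu with ⟨hur', huU'⟩
        refine ⟨?_, Finset.mem_image.mpr ⟨u, hu, rfl⟩⟩
        have hurt : u ≠ rt i := hne_rt i hi u huU' hur'
        have hPu : P i u ∈ U :=
          (hPi.1 u (Finset.mem_erase.mpr ⟨hurt, Finset.mem_of_mem_erase huU'⟩)).1
        by_cases hc : P i u = v
        · simp only [hPcdef, if_pos hc]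
          exact Finset.mem_erase.mpr ⟨hz2, hz1⟩
        · simp only [hPcdef, if_neg hc]
          exact Finset.mem_erase.mpr ⟨hc, hPu⟩
      · -- contracted reachability
        have hπ : ∀ xx, Relation.ReflTransGen (Rel U (rt i) (P i)) (rt i) xx →
            Relation.ReflTransGen (Rel U' (r' i) (Pc i)) (r' i)
              (if xx = v then z i else xx) := by
          intro xx hxx
          induction hxx with
          | refl =>
            have : (if rt i = v then z i else rt i) = r' i := by simp [hr'def]
            rw [this]
          | tail hac hrel ihx =>
            rename_i a c
            rcases hrel with ⟨hcU, hcrt, hacP⟩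
            by_cases hcv : c = v
            · have hrv : rt i ≠ v := fun h => hcrt (hcv.trans h.symm)
              have haz : a = z i := by rw [hacP, hcv, ← hz4 hrv]
              have hav : a ≠ v := by rw [haz]; exact hz2
              simp only [if_pos hcv]
              simpa [if_neg hav, haz] using ihx
            · simp only [if_neg hcv]
              by_cases hcr' : c = r' i
              · rw [hcr']
              · refine ihx.tail ⟨Finset.mem_erase.mpr ⟨hcv, hcU⟩, hcr', ?_⟩
                have : Pc i c = if a = v then z i else a := by
                  simp only [hPcdef, ← hacP]
                rw [this]
        intro u huU'
        have h1 := hπ u (hPi.2 u (Finset.mem_of_mem_erase huU'))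
        rw [if_neg (Finset.mem_erase.mp huU').1] at h1
        exact h1
    obtain ⟨ρ', hρ'U', p', κ', hpar', hre', hinj', hcol'⟩ :=
      ih (n-1) (by omega) (by omega) 𝒜' r' K U' hU'card (by omega) hFam'
    have hρ'U : ρ' ∈ U := Finset.mem_of_mem_erase hρ'U'
    have hρ'v : ρ' ≠ v := (Finset.mem_erase.mp hρ'U').1
    set Q : V → V := fun u => P (κ' u) u with hQdef
    have hQ : ∀ u ∈ U'.erase ρ', Q u ∈ U ∧ (Q u, u) ∈ 𝒜 (κ' u) ∧
        p' u = (if Q u = v then z (κ' u) else Q u) ∧ κ' u ∈ K := by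
      intro u hu
      obtain ⟨hκK, harc'⟩ := hcol' u hu
      obtain ⟨w, hw, heq⟩ := Finset.mem_image.mp harc'
      have hwu : w = u := congrArg Prod.snd heq
      subst hwu
      have hPc : Pc (κ' w) w = p' w := congrArg Prod.fst heq
      have hwrt : w ≠ rt (κ' w) :=
        hne_rt (κ' w) hκK w (Finset.mem_of_mem_erase hw)
          (Finset.mem_erase.mp hw).1
      have hwU : w ∈ U := Finset.mem_of_mem_erase (Finset.mem_of_mem_erase hu)
      obtain ⟨h1, h2⟩ := (hP (κ' w) hκK).2.1 w (Finset.mem_erase.mpr ⟨hwrt, hwU⟩)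
      exact ⟨h1, h2, by rw [← hPc], hκK⟩
    set T := U.filter (fun u => Relation.ReflTransGen (Rel U' ρ' Q) v u) with hTdef
    set M := U \ T with hMdef
    have hvT : v ∈ T := Finset.mem_filter.mpr ⟨hv, .refl⟩
    have hρ'T : ρ' ∉ T := by
      intro h
      rcases (Finset.mem_filter.mp h).2.cases_tail with h' | ⟨c, _, hrel⟩
      · exact hρ'v h'
      · exact hrel.2.1 rfl
    have hρ'M : ρ' ∈ M := Finset.mem_sdiff.mpr ⟨hρ'U, hρ'T⟩
    have hTsub : T ⊆ U := Finset.filter_subset _ _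
    have hmemU'e : ∀ u, u ∈ U → u ≠ v → u ≠ ρ' → u ∈ U'.erase ρ' := by
      intro u h1 h2 h3
      exact Finset.mem_erase.mpr ⟨h3, Finset.mem_erase.mpr ⟨h2, h1⟩⟩
    have hTpar : ∀ u ∈ T.erase v, Q u ∈ T ∧ (Q u, u) ∈ 𝒜 (κ' u) := by
      intro u hu
      rcases Finset.mem_erase.mp hu with ⟨huv, huT⟩
      have huρ' : u ≠ ρ' := fun h => hρ'T (h ▸ huT)
      have hQu := hQ u (hmemU'e u (hTsub huT) huv huρ')
      refine ⟨?_, hQu.2.1⟩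
      rcases (Finset.mem_filter.mp huT).2.cases_tail with h' | ⟨c, hc, hrel⟩
      · exact absurd h' huv
      · have : c = Q u := hrel.2.2
        subst this
        exact Finset.mem_filter.mpr ⟨hQu.1, hc⟩
    have hMpar : ∀ u ∈ M.erase ρ', Q u ∈ M ∧ (Q u, u) ∈ 𝒜 (κ' u) := by
      intro u hu
      rcases Finset.mem_erase.mp hu with ⟨huρ', huM⟩
      rcases Finset.mem_sdiff.mp huM with ⟨huU, huT⟩
      have huv : u ≠ v := fun h => huT (h ▸ hvT)
      have hQu := hQ u (hmemU'e u huU huv huρ')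
      refine ⟨Finset.mem_sdiff.mpr ⟨hQu.1, ?_⟩, hQu.2.1⟩
      intro hQT
      apply huT
      exact Finset.mem_filter.mpr ⟨huU, (Finset.mem_filter.mp hQT).2.tail
        ⟨Finset.mem_erase.mpr ⟨huv, huU⟩, huρ', rfl⟩⟩
    have hTre : Reach T v Q := by
      have key : ∀ xx, Relation.ReflTransGen (Rel U' ρ' Q) v xx →
          Relation.ReflTransGen (Rel T v Q) v xx := by
        intro xx hxx
        induction hxx with
        | refl => exact .refl
        | tail hac hrel ihx =>
          rename_i a c
          have hcT : c ∈ T := Finset.mem_filter.mpr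
            ⟨Finset.mem_of_mem_erase hrel.1, hac.tail hrel⟩
          exact ihx.tail ⟨hcT, (Finset.mem_erase.mp hrel.1).1, hrel.2.2⟩
      intro u hu
      exact key u (Finset.mem_filter.mp hu).2
    have hMre : Reach M ρ' Q := by
      have key : ∀ xx, Relation.ReflTransGen (Rel U' ρ' Q) ρ' xx →
          xx ∈ M ∧ Relation.ReflTransGen (Rel M ρ' Q) ρ' xx := by
        intro xx hxx
        induction hxx with
        | refl => exact ⟨hρ'M, .refl⟩
        | tail hac hrel ihx =>
          rename_i a c
          obtain ⟨haM, hchain⟩ := ihx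
          have hcU : c ∈ U := Finset.mem_of_mem_erase hrel.1
          have hcv : c ≠ v := (Finset.mem_erase.mp hrel.1).1
          have hcM : c ∈ M := by
            refine Finset.mem_sdiff.mpr ⟨hcU, fun hcT => ?_⟩
            have := (hTpar c (Finset.mem_erase.mpr ⟨hcv, hcT⟩)).1
            rw [← hrel.2.2] at this
            exact (Finset.mem_sdiff.mp haM).2 this
          exact ⟨hcM, hchain.tail ⟨hcM, hrel.2.1, hrel.2.2⟩⟩
      intro u hu
      by_cases huρ' : u = ρ'
      · rw [huρ']
      · rcases Finset.mem_sdiff.mp hu with ⟨huU, huT⟩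
        have huv : u ≠ v := fun h => huT (h ▸ hvT)
        have hreach := hre' u (Finset.mem_erase.mpr ⟨huv, huU⟩)
        -- split the chain
        have hsplit2 : ∀ xx, Relation.ReflTransGen (Rel U' ρ' p') ρ' xx →
            Relation.ReflTransGen (Rel U' ρ' Q) ρ' xx ∨
            Relation.ReflTransGen (Rel U' ρ' Q) v xx := by
          intro xx hxx
          induction hxx with
          | refl => exact Or.inl .refl
          | tail hac hrel ihx =>
            rename_i a c
            have hcmem : c ∈ U'.erase ρ' := Finset.mem_erase.mpr ⟨hrel.2.1, hrel.1⟩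
            have hQc := hQ c hcmem
            by_cases hQcv : Q c = v
            · right
              exact Relation.ReflTransGen.single ⟨hrel.1, hrel.2.1, hQcv.symm⟩
            · have haQ : a = Q c := by
                rw [hrel.2.2, hQc.2.2.1, if_neg hQcv]
              rcases ihx with h | h
              · exact Or.inl (h.tail ⟨hrel.1, hrel.2.1, haQ⟩)
              · exact Or.inr (h.tail ⟨hrel.1, hrel.2.1, haQ⟩)
        rcases hsplit2 u hreach with h | h
        · exact (key u h).2
        · exact absurd (Finset.mem_filter.mpr ⟨huU, h⟩) huT
    -- apply TT
    have hdisjTM : Disjoint T M := Finset.disjoint_sdiff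
    have hunionTM : T ∪ M = U := Finset.union_sdiff_of_subset hTsub
    set img := (U'.erase ρ').image κ' with himgdef
    set Fr := K \ img with hFrdef
    have himgcard : img.card ≤ n - 2 := by
      calc img.card ≤ (U'.erase ρ').card := Finset.card_image_le
      _ = n - 2 := by rw [Finset.card_erase_of_mem hρ'U', hU'card]; omega
    have hFrcard : K.card - img.card ≤ Fr.card := Finset.le_card_sdiff _ _
    have hsubU : ∀ u ∈ T.erase v ∪ M.erase ρ', u ∈ U'.erase ρ' := by
      intro u hu
      rcases Finset.mem_union.mp hu with h | h
      · rcases Finset.mem_erase.mp h with ⟨h1, h2⟩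
        exact hmemU'e u (hTsub h2) h1 (fun he => hρ'T (he ▸ h2))
      · rcases Finset.mem_erase.mp h with ⟨h1, h2⟩
        rcases Finset.mem_sdiff.mp h2 with ⟨h3, h4⟩
        exact hmemU'e u h3 (fun he => h4 (he ▸ hvT)) h1
    refine TT 𝒜 rt K U hFam T.card T M v ρ' Q Q κ' Fr rfl hdisjTM hunionTM hvT hρ'M
      hTpar hTre hMpar hMre ?_ ?_ ?_ ?_ ?_
    · exact hinj'.mono (fun u hu => Finset.mem_coe.mpr (hsubU u (Finset.mem_coe.mp hu)))
    · exact fun u hu => (hcol' u (hsubU u hu)).1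
    · exact Finset.sdiff_subset
    · intro u hu h
      exact (Finset.mem_sdiff.mp h).2 (Finset.mem_image.mpr ⟨u, hsubU u hu, rfl⟩)
    · have hMcard : M.card = U.card - T.card := Finset.card_sdiff_of_subset hTsub
      have hTpos : 1 ≤ T.card := Finset.card_pos.mpr ⟨v, hvT⟩
      have hTle : T.card ≤ U.card := Finset.card_le_card hTsub
      omega



variable [DecidableEq V] {k : ℕ}

lemma ofArbor {U : Finset V} {A₀ : Finset (V × V)} {r₀ : V} (h : IsArborOn U A₀ r₀) :
    ∃ p, r₀ ∈ U ∧ PMap U r₀ p A₀ := by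
  classical
  obtain ⟨hr, hin, hhead, hdeg, hreach⟩ := h
  set p : V → V := fun u => if hu : ∃ e ∈ A₀, e.2 = u then hu.choose.1 else u with hpdef
  have hkey : ∀ u ∈ U.erase r₀, (p u, u) ∈ A₀ ∧ ∀ e ∈ A₀, e.2 = u → e = (p u, u) := by
    intro u hu
    rcases Finset.mem_erase.mp hu with ⟨hur, huU⟩
    obtain ⟨e₀, he₀⟩ := Finset.card_eq_one.mp (hdeg u huU hur)
    have he₀mem : e₀ ∈ A₀ ∧ e₀.2 = u := by
      have : e₀ ∈ A₀.filter (fun e => e.2 = u) := he₀ ▸ Finset.mem_singleton_self e₀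
      exact Finset.mem_filter.mp this
    have hex : ∃ e ∈ A₀, e.2 = u := ⟨e₀, he₀mem.1, he₀mem.2⟩
    have hchar : ∀ e ∈ A₀, e.2 = u → e = e₀ := by
      intro e he heu
      have : e ∈ A₀.filter (fun e => e.2 = u) := Finset.mem_filter.mpr ⟨he, heu⟩
      rw [he₀] at this
      exact Finset.mem_singleton.mp this
    have hpu : p u = e₀.1 := by
      rw [hpdef]
      simp only [dif_pos hex]
      exact congrArg Prod.fst (hchar _ hex.choose_spec.1 hex.choose_spec.2)
    have hpe : (p u, u) = e₀ := by
      rw [hpu, ← he₀mem.2]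
    refine ⟨hpe ▸ he₀mem.1, fun e he heu => by rw [hpe]; exact hchar e he heu⟩
  refine ⟨p, hr, fun u hu => ⟨(hin _ (hkey u hu).1).1, (hkey u hu).1⟩, ?_⟩
  intro u hu
  refine Relation.ReflTransGen.mono ?_ _ _ (hreach u hu)
  intro a b hab
  have hbU : b ∈ U := (hin _ hab).2
  have hbr : b ≠ r₀ := hhead _ hab
  have := (hkey b (Finset.mem_erase.mpr ⟨hbr, hbU⟩)).2 _ hab rfl
  exact ⟨hbU, hbr, congrArg Prod.fst this⟩

lemma toArbor {U : Finset V} {w : V} {p : V → V} (hw : w ∈ U)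
    (hpar : ∀ u ∈ U.erase w, p u ∈ U) (hre : Reach U w p) :
    IsArborOn U ((U.erase w).image (fun u => (p u, u))) w := by
  classical
  refine ⟨hw, ?_, ?_, ?_, ?_⟩
  · intro e he
    obtain ⟨u, hu, rfl⟩ := Finset.mem_image.mp he
    exact ⟨hpar u hu, Finset.mem_of_mem_erase hu⟩
  · intro e he
    obtain ⟨u, hu, rfl⟩ := Finset.mem_image.mp he
    exact (Finset.mem_erase.mp hu).1
  · intro u huU hur
    have : ((U.erase w).image (fun u => (p u, u))).filter (fun e => e.2 = u)
        = {(p u, u)} := by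
      ext e
      simp only [Finset.mem_filter, Finset.mem_image, Finset.mem_singleton]
      constructor
      · rintro ⟨⟨a, ha, rfl⟩, h2⟩
        simp only at h2
        subst h2
        rfl
      · rintro rfl
        exact ⟨⟨u, Finset.mem_erase.mpr ⟨hur, huU⟩, rfl⟩, rfl⟩
    rw [this, Finset.card_singleton]
  · intro u huU
    refine Relation.ReflTransGen.mono ?_ _ _ (hre u huU)
    rintro a b ⟨hbU, hbw, rfl⟩
    exact Finset.mem_image.mpr ⟨b, Finset.mem_erase.mpr ⟨hbw, hbU⟩, rfl⟩


end Stmt11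

theorem stmt11 [Fintype V] [DecidableEq V] (hn : 2 ≤ Fintype.card V)
    (k : ℕ) (hk : 2 * Fintype.card V - 3 ≤ k)
    (A : Fin k → Finset (V × V)) (r : Fin k → V)
    (hA : ∀ i, IsSpanningArbor (A i) (r i)) :
    ∃ (B : Finset (V × V)) (r' : V), IsSpanningArbor B r' ∧ IsRainbowOf A B := by
  classical
  have hFam : Stmt11.Fam (Finset.univ : Finset V) A r (Finset.univ : Finset (Fin k)) :=
    fun i _ => Stmt11.ofArbor (hA i)
  obtain ⟨ρ, hρ, p, κ, hpar, hre, hinj, hcol⟩ :=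
    Stmt11.MAIN (Fintype.card V) hn A r Finset.univ Finset.univ Finset.card_univ
      (by rw [Finset.card_univ, Fintype.card_fin]; exact hk) hFam
  refine ⟨(Finset.univ.erase ρ).image (fun u => (p u, u)), ρ, ?_, ?_⟩
  · exact Stmt11.toArbor hρ hpar hre
  · refine ⟨fun e => κ e.2, ?_, ?_⟩
    · intro e1 he1 e2 he2 h12
      rw [Finset.mem_coe] at he1 he2
      obtain ⟨u1, hu1, rfl⟩ := Finset.mem_image.mp he1
      obtain ⟨u2, hu2, rfl⟩ := Finset.mem_image.mp he2
      simp only at h12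
      have := hinj (Finset.mem_coe.mpr hu1) (Finset.mem_coe.mpr hu2) h12
      rw [this]
    · intro e he
      obtain ⟨u, hu, rfl⟩ := Finset.mem_image.mp he
      exact (hcol u hu).2
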